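/- Let τ ⊆ ℝⁿ be the convex hull of finitely many points v_1, …, v_s, and let M be a symmetric positive-definite matrix field that is affine on τ, so that its partial derivative in the k-th coordinate direction is a constant matrix M^k on the interior of τ. Let λ₁(p) denote the smallest eigenvalue of M_p. Then, for every p in the interior of τ and every unit vector r, ρ((D_r M)·M_p⁻¹)/‖M_p r‖ ≤ [ Σ_{k=1}^{n} ρ(M^k)² ]^{1/2} / ( min_{j=1,…,s} λ₁(v_j) )², where D_r M = Σ_k r_k M^k is the (constant) directional derivative of M in direction r. -/

import Mathlib

open Matrix Set

attribute [local instance] Matrix.normedAddCommGroup Matrix.normedSpace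

/-- The application of a matrix to a vector of Euclidean space. -/
noncomputable def mav {n : ℕ} (A : Matrix (Fin n) (Fin n) ℝ)
    (x : EuclideanSpace ℝ (Fin n)) : EuclideanSpace ℝ (Fin n) :=
  Matrix.toEuclideanLin A x

/-- The spectral (operator) norm `ρ` of a matrix. -/
noncomputable def rho {n : ℕ} (A : Matrix (Fin n) (Fin n) ℝ) : ℝ :=
  ‖LinearMap.toContinuousLinearMap (Matrix.toEuclideanLin A)‖

/-- The smallest singular value `ρ_m` of an (invertible) matrix: `ρ_m(A) = ρ(A⁻¹)⁻¹`. -/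
noncomputable def rhom {n : ℕ} (A : Matrix (Fin n) (Fin n) ℝ) : ℝ :=
  (rho A⁻¹)⁻¹

/-- The Voronoi region of a site `v ∈ V` inside `Ω`, w.r.t. an asymmetric distance `D`. -/
def vorRegion {n : ℕ} (Ω V : Set (EuclideanSpace ℝ (Fin n)))
    (D : EuclideanSpace ℝ (Fin n) → EuclideanSpace ℝ (Fin n) → ℝ)
    (v : EuclideanSpace ℝ (Fin n)) : Set (EuclideanSpace ℝ (Fin n)) :=
  {p ∈ Ω | ∀ w ∈ V, D p v ≤ D p w}

/-- The set of ratios whose supremum is the worst-case metric variation `σ0`. -/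
def sigma0Set {n : ℕ} (Ω : Set (EuclideanSpace ℝ (Fin n)))
    (M : EuclideanSpace ℝ (Fin n) → Matrix (Fin n) (Fin n) ℝ) : Set ℝ :=
  {x | ∃ a ∈ Ω, ∃ b ∈ Ω, a ≠ b ∧
    x = rho (M b * (M a)⁻¹ - 1) / ‖mav (M a) (a - b)‖}

/-- The set of ratios whose supremum is the differentiable-metric variation `σ1`
(the directional derivative of `M` at `p` in direction `r` is `fderivWithin ℝ M Ω p r`). -/
noncomputable def sigma1Set {n : ℕ} (Ω : Set (EuclideanSpace ℝ (Fin n)))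
    (M : EuclideanSpace ℝ (Fin n) → Matrix (Fin n) (Fin n) ℝ) : Set ℝ :=
  {x | ∃ p ∈ Ω, ∃ r : EuclideanSpace ℝ (Fin n), ‖r‖ = 1 ∧
    x = rho ((fderivWithin ℝ M Ω p r) * (M p)⁻¹) / ‖mav (M p) r‖}

/-- The smallest eigenvalue `λ₁` of a (symmetric positive-definite) matrix. -/
noncomputable def lam1 {n : ℕ} (A : Matrix (Fin n) (Fin n) ℝ) : ℝ :=
  sInf {x : ℝ | Module.End.HasEigenvalue (Matrix.toEuclideanLin A) x}

/-! ### Auxiliary lemmas -/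

lemma tel_mul_apply {n : ℕ} (A B : Matrix (Fin n) (Fin n) ℝ) (x : EuclideanSpace ℝ (Fin n)) :
    Matrix.toEuclideanLin (A * B) x = Matrix.toEuclideanLin A (Matrix.toEuclideanLin B x) := by
  simp [Matrix.toEuclideanLin_apply, Matrix.mulVec_mulVec]

lemma inner_tel {n : ℕ} (A : Matrix (Fin n) (Fin n) ℝ) (x : EuclideanSpace ℝ (Fin n)) :
    (inner ℝ (Matrix.toEuclideanLin A x) x : ℝ)
      = (A *ᵥ (WithLp.equiv 2 _ x)) ⬝ᵥ (WithLp.equiv 2 _ x) := by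
  simp [EuclideanSpace.inner_eq_star_dotProduct, Matrix.toEuclideanLin_apply, dotProduct, mul_comm]

lemma rho_nonneg {n : ℕ} (A : Matrix (Fin n) (Fin n) ℝ) : 0 ≤ rho A := norm_nonneg _

lemma rho_mul_le {n : ℕ} (A B : Matrix (Fin n) (Fin n) ℝ) : rho (A * B) ≤ rho A * rho B := by
  have h : LinearMap.toContinuousLinearMap (Matrix.toEuclideanLin (A * B))
      = (LinearMap.toContinuousLinearMap (Matrix.toEuclideanLin A)).comp
        (LinearMap.toContinuousLinearMap (Matrix.toEuclideanLin B)) := by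
    refine ContinuousLinearMap.ext fun x => ?_
    exact tel_mul_apply A B x
  rw [rho, h]
  exact ContinuousLinearMap.opNorm_comp_le _ _

lemma rho_smul {n : ℕ} (c : ℝ) (A : Matrix (Fin n) (Fin n) ℝ) : rho (c • A) = |c| * rho A := by
  rw [rho, _root_.map_smul, _root_.map_smul,
    norm_smul c (LinearMap.toContinuousLinearMap (Matrix.toEuclideanLin A)),
    Real.norm_eq_abs, rho]

lemma rho_sum_le {n m : ℕ} (f : Fin m → Matrix (Fin n) (Fin n) ℝ) :
    rho (∑ k, f k) ≤ ∑ k, rho (f k) := by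
  rw [rho, map_sum, map_sum]
  exact norm_sum_le _ _

/-- Rayleigh lower bound implies norm lower bound. -/
lemma norm_tel_ge {n : ℕ} (A : Matrix (Fin n) (Fin n) ℝ) (c : ℝ) (hc : 0 ≤ c)
    (h : ∀ x : EuclideanSpace ℝ (Fin n), c * ‖x‖ ^ 2 ≤ inner ℝ (Matrix.toEuclideanLin A x) x)
    (x : EuclideanSpace ℝ (Fin n)) : c * ‖x‖ ≤ ‖Matrix.toEuclideanLin A x‖ := by
  rcases eq_or_ne x 0 with rfl | hx
  · simp
  · have hx' : 0 < ‖x‖ := norm_pos_iff.2 hx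
    have h1 : c * ‖x‖ ^ 2 ≤ ‖Matrix.toEuclideanLin A x‖ * ‖x‖ :=
      (h x).trans (real_inner_le_norm _ _)
    nlinarith

lemma inner_tel_nonneg {n : ℕ} {A : Matrix (Fin n) (Fin n) ℝ} (hA : A.PosDef)
    (y : EuclideanSpace ℝ (Fin n)) : 0 ≤ (inner ℝ (Matrix.toEuclideanLin A y) y : ℝ) := by
  rcases eq_or_ne y 0 with rfl | hy
  · simp
  · have h := hA.dotProduct_mulVec_pos (x := WithLp.equiv 2 _ y) (by simpa using hy)
    rw [inner_tel, dotProduct_comm]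
    simpa using h.le

lemma inner_tel_pos {n : ℕ} {A : Matrix (Fin n) (Fin n) ℝ} (hA : A.PosDef)
    {y : EuclideanSpace ℝ (Fin n)} (hy : y ≠ 0) :
    0 < (inner ℝ (Matrix.toEuclideanLin A y) y : ℝ) := by
  have h := hA.dotProduct_mulVec_pos (x := WithLp.equiv 2 _ y) (by simpa using hy)
  rw [inner_tel, dotProduct_comm]
  simpa using h

lemma lam1_le_rayleigh {n : ℕ} {A : Matrix (Fin n) (Fin n) ℝ} (hA : A.PosDef)
    {x : EuclideanSpace ℝ (Fin n)} (hx : x ≠ 0) :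
    lam1 A * ‖x‖ ^ 2 ≤ (inner ℝ (Matrix.toEuclideanLin A x) x : ℝ) := by
  haveI : Nontrivial (EuclideanSpace ℝ (Fin n)) := ⟨⟨x, 0, hx⟩⟩
  have hSym : (Matrix.toEuclideanLin A).IsSymmetric :=
    Matrix.isHermitian_iff_isSymmetric.1 hA.1
  set T := Matrix.toEuclideanLin A with hT
  have hbdd : BddBelow (Set.range fun y : {y : EuclideanSpace ℝ (Fin n) // y ≠ 0} =>
      RCLike.re (inner ℝ (T y) (y : EuclideanSpace ℝ (Fin n)) : ℝ) /
        ‖(y : EuclideanSpace ℝ (Fin n))‖ ^ 2) := by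
    refine ⟨0, ?_⟩
    rintro _ ⟨y, rfl⟩
    exact div_nonneg (by simpa using inner_tel_nonneg hA y) (by positivity)
  have hfin : Set.Finite {μ : ℝ | Module.End.HasEigenvalue T μ} :=
    Module.End.finite_hasEigenvalue T
  have hmem := hSym.hasEigenvalue_iInf_of_finiteDimensional
  have h1 : lam1 A ≤ ⨅ y : {y : EuclideanSpace ℝ (Fin n) // y ≠ 0},
      RCLike.re (inner ℝ (T y) (y : EuclideanSpace ℝ (Fin n)) : ℝ) /
        ‖(y : EuclideanSpace ℝ (Fin n))‖ ^ 2 :=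
    csInf_le hfin.bddBelow (by simpa using hmem)
  have h2 := ciInf_le hbdd (⟨x, hx⟩ : {y : EuclideanSpace ℝ (Fin n) // y ≠ 0})
  have h3 : lam1 A ≤ (inner ℝ (T x) x : ℝ) / ‖x‖ ^ 2 := by
    refine (h1.trans h2).trans_eq ?_
    simp
  have hx2 : (0:ℝ) < ‖x‖ ^ 2 := pow_pos (norm_pos_iff.2 hx) 2
  calc lam1 A * ‖x‖ ^ 2 ≤ ((inner ℝ (T x) x : ℝ) / ‖x‖ ^ 2) * ‖x‖ ^ 2 :=
        mul_le_mul_of_nonneg_right h3 hx2.le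
    _ = (inner ℝ (T x) x : ℝ) := by field_simp

lemma lam1_pos {n : ℕ} {A : Matrix (Fin n) (Fin n) ℝ} (hA : A.PosDef)
    (hnt : Nontrivial (EuclideanSpace ℝ (Fin n))) : 0 < lam1 A := by
  have hSym : (Matrix.toEuclideanLin A).IsSymmetric :=
    Matrix.isHermitian_iff_isSymmetric.1 hA.1
  set T := Matrix.toEuclideanLin A with hT
  have hfin : Set.Finite {μ : ℝ | Module.End.HasEigenvalue T μ} :=
    Module.End.finite_hasEigenvalue T
  have hne : Set.Nonempty {μ : ℝ | Module.End.HasEigenvalue T μ} :=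
    ⟨_, by simpa using hSym.hasEigenvalue_iInf_of_finiteDimensional⟩
  have hmem : Module.End.HasEigenvalue T (lam1 A) := hne.csInf_mem hfin
  obtain ⟨y, hy⟩ := hmem.exists_hasEigenvector
  have hpos := inner_tel_pos hA hy.right
  rw [← hT, hy.apply_eq_smul, real_inner_smul_left, real_inner_self_eq_norm_sq] at hpos
  have hy2 : (0:ℝ) < ‖y‖ ^ 2 := pow_pos (norm_pos_iff.2 hy.right) 2
  nlinarith

lemma rho_inv_le {n : ℕ} {A : Matrix (Fin n) (Fin n) ℝ} (hdet : IsUnit A.det) {c : ℝ}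
    (hc : 0 < c)
    (h : ∀ x : EuclideanSpace ℝ (Fin n), c * ‖x‖ ≤ ‖Matrix.toEuclideanLin A x‖) :
    rho A⁻¹ ≤ c⁻¹ := by
  rw [rho]
  refine ContinuousLinearMap.opNorm_le_bound _ (by positivity) fun y => ?_
  show ‖Matrix.toEuclideanLin A⁻¹ y‖ ≤ c⁻¹ * ‖y‖
  set x := Matrix.toEuclideanLin A⁻¹ y with hx
  have hAx : Matrix.toEuclideanLin A x = y := by
    rw [hx, ← tel_mul_apply, Matrix.mul_nonsing_inv A hdet]
    simp [Matrix.toEuclideanLin_apply]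
  have h2 := h x
  rw [hAx] at h2
  calc ‖x‖ = c⁻¹ * (c * ‖x‖) := by field_simp
    _ ≤ c⁻¹ * ‖y‖ := mul_le_mul_of_nonneg_left h2 (by positivity)

theorem stmt9 {n s : ℕ} (v : Fin s → EuclideanSpace ℝ (Fin n))
    (τ : Set (EuclideanSpace ℝ (Fin n))) (hτ : τ = convexHull ℝ (Set.range v))
    (M : EuclideanSpace ℝ (Fin n) → Matrix (Fin n) (Fin n) ℝ)
    (hMpd : ∀ p ∈ τ, (M p).PosDef)
    (A : Matrix (Fin n) (Fin n) ℝ) (Mk : Fin n → Matrix (Fin n) (Fin n) ℝ)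
    (hMaff : ∀ p ∈ τ, M p = A + ∑ k, p k • Mk k) :
    ∀ p ∈ interior τ, ∀ r : EuclideanSpace ℝ (Fin n), ‖r‖ = 1 →
      rho ((∑ k, r k • Mk k) * (M p)⁻¹) / ‖mav (M p) r‖ ≤
        Real.sqrt (∑ k, rho (Mk k) ^ 2) / (⨅ j, lam1 (M (v j))) ^ 2 := by
  intro p hp r hr
  have hr0 : r ≠ 0 := fun h => by simp [h] at hr
  haveI hnt : Nontrivial (EuclideanSpace ℝ (Fin n)) := ⟨⟨r, 0, hr0⟩⟩
  have hpτ : p ∈ τ := interior_subset hp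
  have hvτ : ∀ j, v j ∈ τ := fun j => by
    rw [hτ]; exact subset_convexHull ℝ _ (Set.mem_range_self j)
  -- convex combination representing p
  have hpc : p ∈ convexHull ℝ (Set.range v) := hτ ▸ hpτ
  rw [convexHull_range_eq_exists_affineCombination] at hpc
  obtain ⟨t, w, hw0, hw1, hpw⟩ := hpc
  set W : Fin s → ℝ := fun i => if i ∈ t then w i else 0 with hWdef
  have hW0 : ∀ i, 0 ≤ W i := fun i => by
    by_cases h : i ∈ t <;> simp [hWdef, h] <;> exact hw0 i h
  have hW1 : ∑ i, W i = 1 := by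
    simp only [hWdef]
    rw [Finset.sum_ite_mem, Finset.univ_inter, hw1]
  have hp_eq : p = ∑ i, W i • v i := by
    have h1 : ∀ i, W i • v i
        = if i ∈ t then w i • v i else (0 : EuclideanSpace ℝ (Fin n)) := fun i => by
      by_cases h : i ∈ t <;> simp [hWdef, h]
    rw [← hpw, Finset.affineCombination_eq_linear_combination t v w hw1]
    simp_rw [h1]
    rw [Finset.sum_ite_mem, Finset.univ_inter]
  haveI hsne : Nonempty (Fin s) :=
    ⟨(Finset.nonempty_of_sum_ne_zero (hW1.trans_ne one_ne_zero)).choose⟩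
  -- the infimum c of the smallest vertex eigenvalues
  set c : ℝ := ⨅ j, lam1 (M (v j)) with hc
  have hc_le : ∀ j, c ≤ lam1 (M (v j)) := fun j =>
    ciInf_le (Set.Finite.bddBelow (Set.finite_range _)) j
  obtain ⟨j₀, hj₀⟩ := exists_eq_ciInf_of_finite (f := fun j => lam1 (M (v j)))
  have hc_pos : 0 < c := by
    rw [hc, ← hj₀]
    exact lam1_pos (hMpd _ (hvτ j₀)) hnt
  -- the coordinate-to-matrix linear map
  let Φ : EuclideanSpace ℝ (Fin n) →ₗ[ℝ] Matrix (Fin n) (Fin n) ℝ :=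
    { toFun := fun q => ∑ k, q k • Mk k
      map_add' := fun a b => by
        simp [PiLp.add_apply, add_smul, Finset.sum_add_distrib]
      map_smul' := fun m a => by
        simp [PiLp.smul_apply, smul_smul, Finset.smul_sum] }
  have hΦ : ∀ q, Φ q = ∑ k, q k • Mk k := fun q => rfl
  -- M p is the convex combination of the vertex matrices
  have hMp : M p = ∑ j, W j • M (v j) := by
    have h1 : M p = A + Φ p := by rw [hMaff p hpτ, hΦ]
    have h2 : ∀ j, M (v j) = A + Φ (v j) := fun j => by rw [hMaff _ (hvτ j), hΦ]
    rw [h1, hp_eq, map_sum]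
    simp_rw [h2, smul_add, Finset.sum_add_distrib, ← Finset.sum_smul, hW1, one_smul,
      _root_.map_smul]
  -- Rayleigh lower bound for M p
  have hQ : ∀ x : EuclideanSpace ℝ (Fin n),
      c * ‖x‖ ^ 2 ≤ (inner ℝ (Matrix.toEuclideanLin (M p) x) x : ℝ) := by
    intro x
    rcases eq_or_ne x 0 with rfl | hx
    · simp
    · have h1 : ∀ j, c * ‖x‖ ^ 2 ≤ (inner ℝ (Matrix.toEuclideanLin (M (v j)) x) x : ℝ) := fun j =>
        (mul_le_mul_of_nonneg_right (hc_le j) (sq_nonneg _)).trans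
          (lam1_le_rayleigh (hMpd _ (hvτ j)) hx)
      calc c * ‖x‖ ^ 2 = ∑ j, W j * (c * ‖x‖ ^ 2) := by
            rw [← Finset.sum_mul, hW1, one_mul]
        _ ≤ ∑ j, W j * (inner ℝ (Matrix.toEuclideanLin (M (v j)) x) x : ℝ) :=
            Finset.sum_le_sum fun j _ => mul_le_mul_of_nonneg_left (h1 j) (hW0 j)
        _ = (inner ℝ (Matrix.toEuclideanLin (M p) x) x : ℝ) := by
            rw [hMp, map_sum]
            simp_rw [_root_.map_smul, LinearMap.sum_apply, LinearMap.smul_apply, sum_inner,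
              real_inner_smul_left]
  -- lower bound for the denominator
  have hmav : c ≤ ‖mav (M p) r‖ := by
    have h := norm_tel_ge (M p) c hc_pos.le hQ r
    rw [hr, mul_one] at h
    exact h
  -- bound for ρ((M p)⁻¹)
  have hdet : IsUnit (M p).det := isUnit_iff_ne_zero.2 (hMpd p hpτ).det_pos.ne'
  have hinv : rho (M p)⁻¹ ≤ c⁻¹ :=
    rho_inv_le hdet hc_pos (norm_tel_ge (M p) c hc_pos.le hQ)
  -- Cauchy-Schwarz bound for the derivative matrix
  have hsum : ∑ k, (r k) ^ 2 = 1 := by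
    have h := EuclideanSpace.norm_eq r
    rw [hr] at h
    have h2 : ∑ k, ‖r k‖ ^ 2 = 1 := Real.sqrt_eq_one.1 h.symm
    simpa [Real.norm_eq_abs, sq_abs] using h2
  have hCS : ∑ k, |r k| * rho (Mk k) ≤ Real.sqrt (∑ k, rho (Mk k) ^ 2) := by
    refine Real.le_sqrt_of_sq_le ?_
    have h2 := Finset.sum_mul_sq_le_sq_mul_sq Finset.univ (fun k => |r k|) (fun k => rho (Mk k))
    simpa [sq_abs, hsum] using h2
  have hD : rho (∑ k, r k • Mk k) ≤ Real.sqrt (∑ k, rho (Mk k) ^ 2) := by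
    refine (rho_sum_le _).trans ?_
    calc ∑ k, rho (r k • Mk k) = ∑ k, |r k| * rho (Mk k) := by simp_rw [rho_smul]
      _ ≤ _ := hCS
  -- put everything together
  have hnum : rho ((∑ k, r k • Mk k) * (M p)⁻¹) ≤ Real.sqrt (∑ k, rho (Mk k) ^ 2) * c⁻¹ :=
    (rho_mul_le _ _).trans
      (mul_le_mul hD hinv (rho_nonneg _) (Real.sqrt_nonneg _))
  calc rho ((∑ k, r k • Mk k) * (M p)⁻¹) / ‖mav (M p) r‖
      ≤ (Real.sqrt (∑ k, rho (Mk k) ^ 2) * c⁻¹) / c :=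
        div_le_div₀ (by positivity) hnum hc_pos hmav
    _ = Real.sqrt (∑ k, rho (Mk k) ^ 2) / c ^ 2 := by
        rw [← div_eq_mul_inv, div_div, ← sq]
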